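/- The function Φ(ξ,w) = ∫_ξ^∞ ∫_{−1}^{1} Φ₀(η,w,z) dz dη extends to a continuous function on ℝ_{>0} × [−1,1]; in particular, for each fixed ξ > 0, the limit of Φ(ξ,w) as w → ±1 exists and equals 1 − (12/π²)ξ if ξ ≤ 1/2, and 1 + (6/π²)·(Ψ(2ξ) − log(2ξ) − 1) if ξ ≥ 1/2. -/

import Mathlib

open Real Set MeasureTheory Filter

noncomputable def Υ (x : ℝ) : ℝ := if x ≤ 0 then 0 else if x < 1 then x else 1

noncomputable def Φ₀ (ξ w z : ℝ) : ℝ :=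
  if w + z ≠ 0 then (6 / π ^ 2) * Υ (1 + (ξ⁻¹ - max |w| |z| - 1) / |w + z|)
  else if ξ⁻¹ < 1 + |w| then 0 else 6 / π ^ 2

noncomputable def Φ (ξ w : ℝ) : ℝ := ∫ η in Ioi ξ, ∫ z in (-1 : ℝ)..1, Φ₀ η w z

/-- The dilogarithm `Li₂(x) = ∑_{k≥1} x^k / k²`. -/
noncomputable def Li2 (x : ℝ) : ℝ := ∑' k : ℕ, x ^ (k + 1) / ((k : ℝ) + 1) ^ 2

noncomputable def Ψ (a : ℝ) : ℝ :=
  if a < 1 then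
    -Li2 a + (1 - a) * Real.log (a⁻¹ - 1) + Real.log a - (1 / 2) * (Real.log a) ^ 2 + π ^ 2 / 6
  else if a = 1 then 0
  else Li2 a⁻¹ - (a - 1) * Real.log (1 - a⁻¹) + Real.log a - π ^ 2 / 6

/-- The boundary value of `Φ(ξ, ·)` at `w = ±1`. -/
noncomputable def Φbd (ξ : ℝ) : ℝ :=
  if ξ ≤ 1 / 2 then 1 - 12 / π ^ 2 * ξ
  else 1 + 6 / π ^ 2 * (Ψ (2 * ξ) - Real.log (2 * ξ) - 1)

/-! ### Basic lemmas on Υ -/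

lemma Υ_eq (x : ℝ) : Υ x = max 0 (min 1 x) := by
  unfold Υ
  rcases le_or_gt x 0 with h | h
  · rw [if_pos h, max_eq_left]
    exact min_le_of_right_le h
  · rw [if_neg (not_le.2 h)]
    rcases lt_or_ge x 1 with h1 | h1
    · rw [if_pos h1, min_eq_right h1.le, max_eq_right h.le]
    · rw [if_neg (not_lt.2 h1), min_eq_left h1, max_eq_right zero_le_one]

lemma Υ_continuous : Continuous Υ := by
  simp only [funext Υ_eq]
  fun_prop

lemma Υ_nonneg (x : ℝ) : 0 ≤ Υ x := by rw [Υ_eq]; exact le_max_left _ _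

lemma Υ_le_one (x : ℝ) : Υ x ≤ 1 := by
  rw [Υ_eq]; exact max_le zero_le_one (min_le_left _ _)

lemma Υ_le_max (x : ℝ) : Υ x ≤ max 0 x :=
  (Υ_eq x) ▸ max_le_max le_rfl (min_le_right _ _)

lemma Υ_of_nonpos {x : ℝ} (h : x ≤ 0) : Υ x = 0 := if_pos h

lemma Υ_of_one_le {x : ℝ} (h : 1 ≤ x) : Υ x = 1 := by
  unfold Υ
  rw [if_neg (by linarith), if_neg (by linarith)]

/-! ### Basic lemmas on Φ₀ -/

lemma pi_sq_pos : (0:ℝ) < π ^ 2 := by positivity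

lemma Φ₀_nonneg (η w z : ℝ) : 0 ≤ Φ₀ η w z := by
  unfold Φ₀
  split_ifs
  · exact mul_nonneg (by positivity) (Υ_nonneg _)
  · exact le_rfl
  · positivity

lemma Φ₀_le (η w z : ℝ) : Φ₀ η w z ≤ 6 / π ^ 2 := by
  unfold Φ₀
  split_ifs
  · have := mul_le_mul_of_nonneg_left (Υ_le_one (1 + (η⁻¹ - max |w| |z| - 1) / |w + z|))
      (show (0:ℝ) ≤ 6 / π ^ 2 by positivity)
    simpa using this
  · positivity
  · exact le_rfl

lemma Φ₀_abs_le (η w z : ℝ) : |Φ₀ η w z| ≤ 6 / π ^ 2 := by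
  rw [abs_of_nonneg (Φ₀_nonneg η w z)]; exact Φ₀_le η w z

lemma Φ₀_measurable (η w : ℝ) : Measurable (Φ₀ η w) := by
  unfold Φ₀
  refine Measurable.ite (measurableSet_eq_fun (by fun_prop) measurable_const).compl ?_ ?_
  · have hΥ : Measurable Υ := Υ_continuous.measurable
    fun_prop
  · fun_prop

/-- Vanishing: if `η⁻¹ + |z| < 1` then `Φ₀ η w z = 0`. -/
lemma Φ₀_eq_zero {η w z : ℝ} (h : η⁻¹ + |z| < 1) : Φ₀ η w z = 0 := by
  unfold Φ₀
  rcases eq_or_ne (w + z) 0 with h0 | h0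
  · rw [if_neg (by simpa using h0), if_pos]
    have : (0:ℝ) ≤ |z| := abs_nonneg z
    have : (0:ℝ) ≤ |w| := abs_nonneg w
    linarith
  · rw [if_pos h0]
    have hs : 0 < |w + z| := abs_pos.2 h0
    have hzb : |z| ≤ max |w| |z| := le_max_right _ _
    have hwz : |w + z| ≤ |w| + |z| := abs_add_le w z
    have hmin : min |w| |z| ≤ |z| := min_le_right _ _
    have hsum : |w| + |z| = max |w| |z| + min |w| |z| := (max_add_min _ _).symm
    have harg : 1 + (η⁻¹ - max |w| |z| - 1) / |w + z| ≤ 0 := by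
      have : |w + z| + (η⁻¹ - max |w| |z| - 1) ≤ 0 := by
        have : |w + z| ≤ max |w| |z| + |z| := by linarith
        linarith
      have h2 : 1 + (η⁻¹ - max |w| |z| - 1) / |w + z| =
          (|w + z| + (η⁻¹ - max |w| |z| - 1)) / |w + z| := by field_simp
      rw [h2]
      exact div_nonpos_of_nonpos_of_nonneg this hs.le
    rw [Υ_of_nonpos harg, mul_zero]

/-- Smallness: for `η⁻¹ ≤ 1/2` and `|w|, |z| ≤ 1`, `Φ₀ η w z ≤ (6/π²)·η⁻¹`. -/
lemma Φ₀_le_inv {η w z : ℝ} (hη : η⁻¹ ≤ 1/2) (hη0 : 0 < η⁻¹) (hw : |w| ≤ 1) (hz : |z| ≤ 1) :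
    Φ₀ η w z ≤ 6 / π ^ 2 * η⁻¹ := by
  set t := η⁻¹ with ht
  unfold Φ₀
  rcases eq_or_ne (w + z) 0 with h0 | h0
  · rw [if_neg (by simpa using h0), if_pos (by linarith [abs_nonneg w])]
    positivity
  · rw [if_pos h0]
    have hs : 0 < |w + z| := abs_pos.2 h0
    set s := |w + z| with hsdef
    set M := max |w| |z| with hM
    set m := min |w| |z| with hm
    have hMz : M ≤ 1 := max_le hw hz
    have hm1 : m ≤ 1 := (min_le_right _ _).trans hz
    have hsum : s ≤ M + m := by
      rw [hsdef, hM, hm]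
      rcases max_cases |w| |z| with ⟨h1, h2⟩ | ⟨h1, h2⟩ <;>
        rcases min_cases |w| |z| with ⟨h3, h4⟩ | ⟨h3, h4⟩ <;>
        · rw [h1, h3]; rcases abs_add_le w z with h; linarith [abs_add_le w z]
    have key : Υ (1 + (t - M - 1) / s) ≤ t := by
      rcases le_or_gt (1 + (t - M - 1) / s) 0 with harg | harg
      · rw [Υ_of_nonpos harg]; linarith
      · -- arg > 0, so s > 1 + M - t, hence m > 1 - t
        have hs1 : 1 + M - t < s := by
          by_contra hc
          push_neg at hc
          have : (t - M - 1) / s ≤ -1 := by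
            rw [div_le_iff₀ hs]
            linarith
          linarith
        have hmgt : 1 - t < m := by nlinarith
        have harg2 : (1 + (t - M - 1) / s) ≤ t := by
          rw [← sub_nonpos]
          have h2 : 1 + (t - M - 1) / s - t = (s * (1 - t) - (1 + M - t)) / s := by
            field_simp; ring
          rw [h2]
          apply div_nonpos_of_nonpos_of_nonneg _ hs.le
          have hmM : m ≤ M := min_le_max
          have h3 : s * (1 - t) ≤ (M + m) * (1 - t) := by nlinarith
          have h4 : (0:ℝ) ≤ t * (M + m - 1) := mul_nonneg hη0.le (by linarith)
          nlinarith
        calc Υ (1 + (t - M - 1) / s) ≤ max 0 (1 + (t - M - 1) / s) := Υ_le_max _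
          _ = 1 + (t - M - 1) / s := max_eq_right harg.le
          _ ≤ t := harg2
    calc 6 / π ^ 2 * Υ (1 + (t - M - 1) / s) ≤ 6 / π ^ 2 * t :=
      mul_le_mul_of_nonneg_left key (by positivity)

/-! ### The inner integral -/

noncomputable def Iin (η w : ℝ) : ℝ := ∫ z in (-1:ℝ)..1, Φ₀ η w z

lemma Φ_eq_Iin (ξ w : ℝ) : Φ ξ w = ∫ η in Ioi ξ, Iin η w := rfl

lemma Iin_eq_set (η w : ℝ) : Iin η w = ∫ z in Ioc (-1:ℝ) 1, Φ₀ η w z := by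
  rw [Iin, intervalIntegral.integral_of_le (by norm_num)]

lemma Φ₀_integrableOn {η w : ℝ} {s : Set ℝ} (hs : volume s ≠ ⊤) :
    IntegrableOn (Φ₀ η w) s := by
  refine Integrable.mono' (g := fun _ => 6 / π ^ 2)
    (integrableOn_const hs)
    ((Φ₀_measurable η w).aestronglyMeasurable.restrict) ?_
  exact Eventually.of_forall fun z => by
    rw [Real.norm_eq_abs]; exact Φ₀_abs_le η w z

lemma Iin_abs_le (η w : ℝ) : |Iin η w| ≤ 12 / π ^ 2 := by
  rw [Iin_eq_set]
  have h := norm_setIntegral_le_of_norm_le_const (μ := volume) (s := Ioc (-1:ℝ) 1)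
    (C := 6 / π ^ 2) (by simp) (fun z _ => by rw [Real.norm_eq_abs]; exact Φ₀_abs_le η w z)
  rw [Real.norm_eq_abs] at h
  calc |∫ z in Ioc (-1:ℝ) 1, Φ₀ η w z| ≤ 6 / π ^ 2 * (volume (Ioc (-1:ℝ) 1)).toReal := h
    _ = 12 / π ^ 2 := by
      rw [Real.volume_Ioc]
      norm_num
      ring

lemma Iin_nonneg (η w : ℝ) : 0 ≤ Iin η w := by
  rw [Iin_eq_set]
  exact setIntegral_nonneg measurableSet_Ioc fun z _ => Φ₀_nonneg η w z

/-- Decay: for `η ≥ 2` and `|w| ≤ 1`, `Iin η w ≤ (12/π²) η⁻¹²`. -/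
lemma Iin_le_sq {η w : ℝ} (hη : 2 ≤ η) (hw : |w| ≤ 1) :
    Iin η w ≤ 12 / π ^ 2 * η⁻¹ ^ 2 := by
  have hη0 : (0:ℝ) < η := by linarith
  have ht0 : 0 < η⁻¹ := inv_pos.2 hη0
  have ht : η⁻¹ ≤ 1/2 := by
    rw [inv_le_comm₀ hη0 (by norm_num)]
    simpa using hη
  set t := η⁻¹ with htdef
  set B : ℝ → ℝ := fun z => if 1 - t ≤ |z| then 6 / π ^ 2 * t else 0 with hB
  have hmono : ∀ z ∈ Ioc (-1:ℝ) 1, Φ₀ η w z ≤ B z := by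
    intro z hz
    simp only [hB]
    rcases le_or_gt (1 - t) |z| with h | h
    · rw [if_pos h]
      exact Φ₀_le_inv ht ht0 hw (abs_le.2 ⟨hz.1.le, hz.2⟩)
    · rw [if_neg (not_le.2 h)]
      exact le_of_eq (Φ₀_eq_zero (by linarith))
  have hBint : IntegrableOn B (Ioc (-1:ℝ) 1) := by
    refine Integrable.mono' (integrable_const (6 / π ^ 2 * t)) ?_ ?_
    · apply AEStronglyMeasurable.restrict
      apply Measurable.aestronglyMeasurable
      exact Measurable.ite (measurableSet_le measurable_const measurable_abs) measurable_const
        measurable_const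
    · refine Eventually.of_forall fun z => ?_
      simp only [hB, Real.norm_eq_abs]
      split_ifs with h
      · rw [abs_of_nonneg (by positivity)]
      · rw [abs_zero]; positivity
  have h1 : Iin η w ≤ ∫ z in Ioc (-1:ℝ) 1, B z := by
    rw [Iin_eq_set]
    exact setIntegral_mono_on (Φ₀_integrableOn (by simp)) hBint measurableSet_Ioc hmono
  have h2 : ∫ z in Ioc (-1:ℝ) 1, B z ≤ 6 / π ^ 2 * t * (2 * t) := by
    have hBind : ∀ z, B z = Set.indicator {z : ℝ | 1 - t ≤ |z|} (fun _ => 6 / π ^ 2 * t) z := by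
      intro z
      rw [hB, Set.indicator_apply]
      simp only [mem_setOf_eq]
    have hmeas : MeasurableSet {z : ℝ | 1 - t ≤ |z|} :=
      measurableSet_le measurable_const measurable_abs
    calc ∫ z in Ioc (-1:ℝ) 1, B z
        = ∫ z in Ioc (-1:ℝ) 1, Set.indicator {z : ℝ | 1 - t ≤ |z|} (fun _ => 6 / π ^ 2 * t) z := by
          exact setIntegral_congr_fun measurableSet_Ioc fun z _ => hBind z
      _ = (6 / π ^ 2 * t) * (volume ({z : ℝ | 1 - t ≤ |z|} ∩ Ioc (-1:ℝ) 1)).toReal := by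
          rw [setIntegral_indicator hmeas, setIntegral_const, smul_eq_mul, mul_comm,
            Set.inter_comm]; rfl
      _ ≤ 6 / π ^ 2 * t * (2 * t) := by
          apply mul_le_mul_of_nonneg_left _ (by positivity)
          have hsub : {z : ℝ | 1 - t ≤ |z|} ∩ Ioc (-1:ℝ) 1 ⊆
              Icc (-1:ℝ) (-(1-t)) ∪ Icc (1-t) 1 := by
            intro z ⟨hz1, hz2⟩
            simp only [mem_setOf_eq] at hz1
            rcases abs_cases z with ⟨he, _⟩ | ⟨he, _⟩
            · right; exact ⟨by linarith, hz2.2⟩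
            · left; exact ⟨hz2.1.le, by linarith⟩
          have hv : volume ({z : ℝ | 1 - t ≤ |z|} ∩ Ioc (-1:ℝ) 1) ≤
              ENNReal.ofReal t + ENNReal.ofReal t := by
            refine le_trans (measure_mono hsub) (le_trans (measure_union_le _ _) ?_)
            rw [Real.volume_Icc, Real.volume_Icc]
            exact add_le_add (ENNReal.ofReal_le_ofReal (by linarith))
              (ENNReal.ofReal_le_ofReal (by linarith))
          calc (volume ({z : ℝ | 1 - t ≤ |z|} ∩ Ioc (-1:ℝ) 1)).toReal
              ≤ (ENNReal.ofReal t + ENNReal.ofReal t).toReal := by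
                apply ENNReal.toReal_mono _ hv
                simp [ENNReal.add_ne_top]
            _ = 2 * t := by
                rw [ENNReal.toReal_add ENNReal.ofReal_ne_top ENNReal.ofReal_ne_top,
                  ENNReal.toReal_ofReal ht0.le]
                ring
  calc Iin η w ≤ 6 / π ^ 2 * t * (2 * t) := h1.trans h2
    _ = 12 / π ^ 2 * t ^ 2 := by ring

/-! ### Continuity of the inner integral -/

lemma Φ₀_continuousAt {η₀ w₀ z : ℝ} (hη : 0 < η₀) (hz : z ≠ -w₀) :
    ContinuousAt (fun p : ℝ × ℝ => Φ₀ p.1 p.2 z) (η₀, w₀) := by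
  have h0 : w₀ + z ≠ 0 := fun h => hz (by linarith)
  have hev : ∀ᶠ p : ℝ × ℝ in nhds (η₀, w₀), p.2 + z ≠ 0 ∧ p.1 ≠ 0 := by
    have hc : Continuous (fun p : ℝ × ℝ => p.2 + z) := by fun_prop
    have h1 : ∀ᶠ p : ℝ × ℝ in nhds (η₀, w₀), p.2 + z ≠ 0 :=
      hc.continuousAt.eventually_ne h0
    have h2 : ∀ᶠ p : ℝ × ℝ in nhds (η₀, w₀), p.1 ≠ 0 :=
      (continuous_fst.continuousAt (x := (η₀, w₀))).eventually_ne hη.ne'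
    exact h1.and h2
  have heq : ∀ᶠ p : ℝ × ℝ in nhds (η₀, w₀), Φ₀ p.1 p.2 z =
      6 / π ^ 2 * Υ (1 + (p.1⁻¹ - max |p.2| |z| - 1) / |p.2 + z|) := by
    filter_upwards [hev] with p hp
    rw [Φ₀, if_pos hp.1]
  have hcont : ContinuousAt
      (fun p : ℝ × ℝ => 6 / π ^ 2 * Υ (1 + (p.1⁻¹ - max |p.2| |z| - 1) / |p.2 + z|)) (η₀, w₀) := by
    apply ContinuousAt.mul continuousAt_const
    apply Υ_continuous.continuousAt.comp
    apply ContinuousAt.add continuousAt_const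
    apply ContinuousAt.div
    · fun_prop (disch := exact hη.ne')
    · fun_prop
    · simpa using abs_ne_zero.2 h0
  exact ContinuousAt.congr hcont (heq.mono fun p hp => hp.symm)

lemma Iin_continuousAt {η₀ w₀ : ℝ} (hη : 0 < η₀) :
    ContinuousAt (fun p : ℝ × ℝ => Iin p.1 p.2) (η₀, w₀) := by
  have key : ContinuousAt
      (fun p : ℝ × ℝ => ∫ z, Φ₀ p.1 p.2 z ∂(volume.restrict (Ioc (-1:ℝ) 1))) (η₀, w₀) := by
    apply continuousAt_of_dominated (bound := fun _ => 6 / π ^ 2)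
    · exact Eventually.of_forall fun p => (Φ₀_measurable p.1 p.2).aestronglyMeasurable.restrict
    · exact Eventually.of_forall fun p => Eventually.of_forall fun z => by
        rw [Real.norm_eq_abs]; exact Φ₀_abs_le p.1 p.2 z
    · exact integrableOn_const (by simp)
    · have hz : ∀ᵐ z ∂(volume.restrict (Ioc (-1:ℝ) 1)), z ≠ -w₀ := by
        refine ae_restrict_of_ae ?_
        have : volume ({-w₀} : Set ℝ) = 0 := volume_singleton
        filter_upwards [measure_eq_zero_iff_ae_notMem.1 this] with z hz
        simpa using hz
      filter_upwards [hz] with z hz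
      exact Φ₀_continuousAt hη hz
  refine key.congr (Eventually.of_forall fun p => ?_)
  simp only []
  rw [Iin_eq_set]

/-! ### The dominating function for the outer integral -/

noncomputable def gbd (η : ℝ) : ℝ := if η < 2 then 12 / π ^ 2 else 12 / π ^ 2 * η⁻¹ ^ 2

lemma gbd_meas : Measurable gbd :=
  Measurable.ite (measurableSet_lt measurable_id measurable_const) measurable_const (by fun_prop)

lemma gbd_abs_le (η : ℝ) : |gbd η| ≤ 12 / π ^ 2 := by
  unfold gbd
  split_ifs with h
  · rw [abs_of_nonneg (by positivity)]
  · push_neg at h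
    rw [abs_of_nonneg (by positivity)]
    have h1 : η⁻¹ ≤ 1/2 := by
      rw [inv_le_comm₀ (by linarith) (by norm_num)]; linarith
    have h2 : (0:ℝ) ≤ η⁻¹ := inv_nonneg.2 (by linarith)
    have h3 : η⁻¹ ^ 2 ≤ 1 := by nlinarith
    exact (mul_le_mul_of_nonneg_left h3 (by positivity)).trans_eq (mul_one _)

lemma Iin_le_gbd {η w : ℝ} (hη : 0 < η) (hw : |w| ≤ 1) : ‖Iin η w‖ ≤ gbd η := by
  rw [Real.norm_eq_abs]
  unfold gbd
  split_ifs with h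
  · exact Iin_abs_le η w
  · push_neg at h
    rw [abs_of_nonneg (Iin_nonneg η w)]
    exact Iin_le_sq h hw

lemma gbd_integrableOn {a : ℝ} (ha : 0 < a) : IntegrableOn gbd (Ioi a) := by
  have h2 : IntegrableOn gbd (Ioi (2:ℝ)) := by
    have hr : IntegrableOn (fun η : ℝ => 12 / π ^ 2 * η ^ (-2:ℝ)) (Ioi (2:ℝ)) :=
      (integrableOn_Ioi_rpow_of_lt (by norm_num) (by norm_num)).const_mul _
    apply hr.congr_fun _ measurableSet_Ioi
    intro η hη
    have hη0 : (0:ℝ) < η := lt_trans (by norm_num) hη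
    rw [gbd, if_neg (not_lt.2 (le_of_lt hη))]
    have he : η ^ (-2:ℝ) = η⁻¹ ^ 2 := by
      rw [show (-2:ℝ) = ((-2:ℤ):ℝ) by norm_num, Real.rpow_intCast, zpow_neg, inv_pow]
      norm_cast
    simp only [he]
  have h1 : IntegrableOn gbd (Ioc a 2) := by
    refine Integrable.mono' (g := fun _ => 12 / π ^ 2)
      (integrableOn_const (by simp)) (gbd_meas.aestronglyMeasurable.restrict) ?_
    exact Eventually.of_forall fun η => by rw [Real.norm_eq_abs]; exact gbd_abs_le η
  exact ((h1.union h2).mono_set (fun η hη => by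
    rcases le_or_gt η 2 with h | h
    · exact Or.inl ⟨hη, h⟩
    · exact Or.inr h))

lemma Iin_continuousOn_fixed (w : ℝ) : ContinuousOn (fun η => Iin η w) (Ioi (0:ℝ)) := by
  intro η hη
  have : ContinuousAt (fun η => Iin η w) η := by
    have hcomp : ContinuousAt (fun η : ℝ => ((η, w) : ℝ × ℝ)) η := by fun_prop
    exact ContinuousAt.comp (x := η) (g := fun p : ℝ × ℝ => Iin p.1 p.2)
      (f := fun η : ℝ => ((η, w) : ℝ × ℝ)) (Iin_continuousAt hη) hcomp
  exact this.continuousWithinAt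

lemma Iin_integrableOn {ξ w : ℝ} (hξ : 0 < ξ) (hw : |w| ≤ 1) :
    IntegrableOn (fun η => Iin η w) (Ioi ξ) := by
  refine Integrable.mono' (gbd_integrableOn hξ)
    (((Iin_continuousOn_fixed w).mono (Ioi_subset_Ioi hξ.le)).aestronglyMeasurable
      measurableSet_Ioi) ?_
  refine (ae_restrict_iff' measurableSet_Ioi).2 (Eventually.of_forall fun η hη => ?_)
  exact Iin_le_gbd (lt_trans hξ hη) hw

/-! ### Continuity of Φ on the closed strip -/

lemma Φ_continuousOn :
    ContinuousOn (fun p : ℝ × ℝ => Φ p.1 p.2) (Ioi (0:ℝ) ×ˢ Icc (-1:ℝ) 1) := by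
  set S : Set (ℝ × ℝ) := Ioi (0:ℝ) ×ˢ Icc (-1:ℝ) 1 with hS
  rintro ⟨ξ₀, w₀⟩ hp
  obtain ⟨hξ₀, hw₀⟩ := hp
  simp only [mem_Ioi] at hξ₀
  set a := ξ₀ / 2 with ha
  have ha0 : 0 < a := by positivity
  have haξ : a < ξ₀ := by rw [ha]; linarith
  set μ := volume.restrict (Ioi a) with hμ
  set F : ℝ × ℝ → ℝ → ℝ := fun p η => Set.indicator (Ioi p.1) (fun η => Iin η p.2) η with hF
  have hmeasF : ∀ p : ℝ × ℝ, AEStronglyMeasurable (F p) μ := by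
    intro p
    apply AEStronglyMeasurable.indicator _ measurableSet_Ioi
    exact ((Iin_continuousOn_fixed p.2).mono (Ioi_subset_Ioi ha0.le)).aestronglyMeasurable
      measurableSet_Ioi
  have key : ContinuousWithinAt (fun p : ℝ × ℝ => ∫ η, F p η ∂μ) S (ξ₀, w₀) := by
    apply continuousWithinAt_of_dominated (bound := gbd)
    · exact Eventually.of_forall hmeasF
    · filter_upwards [self_mem_nhdsWithin] with p hpS
      refine (ae_restrict_iff' measurableSet_Ioi).2 (Eventually.of_forall fun η hη => ?_)
      have hw : |p.2| ≤ 1 := abs_le.2 ⟨hpS.2.1, hpS.2.2⟩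
      calc ‖F p η‖ ≤ ‖Iin η p.2‖ := norm_indicator_le_norm_self _ _
        _ ≤ gbd η := Iin_le_gbd (lt_trans ha0 hη) hw
    · exact gbd_integrableOn ha0
    · have hne : ∀ᵐ η ∂μ, η ≠ ξ₀ := by
        refine ae_restrict_of_ae ?_
        filter_upwards [measure_eq_zero_iff_ae_notMem.1 (volume_singleton (a := ξ₀))] with η hη
        simpa using hη
      have hmem : ∀ᵐ η ∂μ, η ∈ Ioi a := (ae_restrict_iff' measurableSet_Ioi).2
        (Eventually.of_forall fun η hη => hη)
      filter_upwards [hne, hmem] with η hηne hηa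
      rcases lt_or_gt_of_ne hηne with hlt | hgt
      · -- η < ξ₀ : F p η is eventually 0
        have hev : ∀ᶠ p : ℝ × ℝ in nhdsWithin (ξ₀, w₀) S, F p η = 0 := by
          have hopen : IsOpen {p : ℝ × ℝ | η < p.1} := isOpen_lt continuous_const continuous_fst
          have : {p : ℝ × ℝ | η < p.1} ∈ nhds (ξ₀, w₀) := hopen.mem_nhds hlt
          filter_upwards [nhdsWithin_le_nhds this] with p hp
          exact Set.indicator_of_notMem (by simpa using (not_lt.2 (le_of_lt hp))) _
        apply ContinuousWithinAt.congr_of_eventuallyEq continuousWithinAt_const hev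
        exact Set.indicator_of_notMem (by simpa using (not_lt.2 (le_of_lt hlt))) _
      · -- ξ₀ < η : F p η is eventually Iin η p.2
        have hbase : ContinuousWithinAt (fun p : ℝ × ℝ => Iin η p.2) S (ξ₀, w₀) := by
          apply ContinuousAt.continuousWithinAt
          have hcomp : ContinuousAt (fun p : ℝ × ℝ => ((η, p.2) : ℝ × ℝ)) (ξ₀, w₀) := by fun_prop
          exact ContinuousAt.comp (x := ((ξ₀, w₀) : ℝ × ℝ))
            (g := fun q : ℝ × ℝ => Iin q.1 q.2)
            (f := fun p : ℝ × ℝ => ((η, p.2) : ℝ × ℝ)) (Iin_continuousAt (lt_trans ha0 hηa))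
            hcomp
        have hev : ∀ᶠ p : ℝ × ℝ in nhdsWithin (ξ₀, w₀) S, F p η = Iin η p.2 := by
          have hopen : IsOpen {p : ℝ × ℝ | p.1 < η} := isOpen_lt continuous_fst continuous_const
          have : {p : ℝ × ℝ | p.1 < η} ∈ nhds (ξ₀, w₀) := hopen.mem_nhds hgt
          filter_upwards [nhdsWithin_le_nhds this] with p hp
          exact Set.indicator_of_mem (by simpa using hp) _
        apply ContinuousWithinAt.congr_of_eventuallyEq hbase hev
        exact Set.indicator_of_mem (by simpa using hgt) _
  have heq : ∀ᶠ p : ℝ × ℝ in nhdsWithin (ξ₀, w₀) S,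
      Φ p.1 p.2 = ∫ η, F p η ∂μ := by
    have hopen : IsOpen {p : ℝ × ℝ | a < p.1} := isOpen_lt continuous_const continuous_fst
    have hmem : {p : ℝ × ℝ | a < p.1} ∈ nhds (ξ₀, w₀) := hopen.mem_nhds haξ
    filter_upwards [nhdsWithin_le_nhds hmem] with p hp
    rw [Φ_eq_Iin, hμ, hF]
    rw [integral_indicator measurableSet_Ioi, Measure.restrict_restrict measurableSet_Ioi,
      Ioi_inter_Ioi, sup_eq_left.2 (le_of_lt hp)]
  exact key.congr_of_eventuallyEq heq (by
    rw [Φ_eq_Iin, hμ, hF, integral_indicator measurableSet_Ioi,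
      Measure.restrict_restrict measurableSet_Ioi, Ioi_inter_Ioi,
      sup_eq_left.2 (le_of_lt haξ)])

/-! ### Dilogarithm lemmas -/

lemma summable_inv_sq : Summable (fun k : ℕ => 1 / ((k:ℝ) + 1) ^ 2) := by
  have h : Summable (fun n : ℕ => 1 / (n:ℝ) ^ 2) :=
    Real.summable_one_div_nat_pow.2 one_lt_two
  have := (summable_nat_add_iff 1).2 h
  refine this.congr fun k => ?_
  push_cast
  ring

lemma Li2_continuousOn : ContinuousOn Li2 (Icc (-1:ℝ) 1) := by
  rw [continuousOn_iff_continuous_restrict]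
  have : ∀ x : Icc (-1:ℝ) 1, (Icc (-1:ℝ) 1).restrict Li2 x =
      ∑' k : ℕ, ((x:ℝ) ^ (k + 1) / ((k:ℝ) + 1) ^ 2) := fun x => rfl
  change Continuous (fun x : Icc (-1:ℝ) 1 => ∑' k : ℕ, ((x:ℝ) ^ (k + 1) / ((k:ℝ) + 1) ^ 2))
  apply continuous_tsum (u := fun k : ℕ => 1 / ((k:ℝ) + 1) ^ 2)
  · intro k
    fun_prop
  · exact summable_inv_sq
  · intro k x
    rw [Real.norm_eq_abs, abs_div, abs_of_nonneg (by positivity : (0:ℝ) ≤ ((k:ℝ)+1)^2)]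
    have hx : |(x:ℝ)| ≤ 1 := abs_le.2 ⟨x.2.1, x.2.2⟩
    have h1 : |(x:ℝ) ^ (k+1)| ≤ 1 := by
      rw [abs_pow]; exact pow_le_one₀ (abs_nonneg _) hx
    gcongr

lemma Li2_one : Li2 1 = π ^ 2 / 6 := by
  have h := hasSum_zeta_two
  have h0 : (fun n : ℕ => (1:ℝ) / (n:ℝ) ^ 2) 0 = 0 := by simp
  have h2 : HasSum (fun k : ℕ => (1:ℝ) / ((k:ℝ) + 1) ^ 2) (π ^ 2 / 6) := by
    have := (hasSum_nat_add_iff' (f := fun n : ℕ => (1:ℝ) / (n:ℝ) ^ 2) 1).2 h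
    simp only [Finset.range_one, Finset.sum_singleton, h0, sub_zero] at this
    refine this.congr_fun fun k => ?_
    push_cast
    ring_nf
  rw [Li2]
  have : ∀ k : ℕ, (1:ℝ) ^ (k + 1) / ((k:ℝ) + 1) ^ 2 = 1 / ((k:ℝ) + 1) ^ 2 := by
    intro k; rw [one_pow]
  rw [funext this]
  exact h2.tsum_eq

lemma Li2_zero : Li2 0 = 0 := by
  rw [Li2]
  have : ∀ k : ℕ, (0:ℝ) ^ (k + 1) / ((k:ℝ) + 1) ^ 2 = 0 := by
    intro k
    rw [zero_pow (Nat.succ_ne_zero k), zero_div]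
  rw [funext this, tsum_zero]

/-- The integrand whose primitive is `Li2`. -/
noncomputable def li2f (u : ℝ) : ℝ := -Real.log (1 - u) / u

lemma li2f_meas : Measurable li2f :=
  ((Real.measurable_log.comp (measurable_const.sub measurable_id)).neg).div measurable_id

lemma li2f_bounds {b u : ℝ} (hb : b < 1) (hu : u ∈ Ioc (0:ℝ) b) :
    0 ≤ li2f u ∧ li2f u ≤ 1 / (1 - b) := by
  obtain ⟨hu0, hub⟩ := hu
  have h1u : 0 < 1 - u := by linarith
  have hlog0 : Real.log (1 - u) ≤ 0 := Real.log_nonpos (by linarith) (by linarith)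
  constructor
  · exact div_nonneg (by linarith) hu0.le
  · have hkey : -Real.log (1 - u) ≤ u / (1 - u) := by
      have := Real.log_le_sub_one_of_pos (show (0:ℝ) < (1 - u)⁻¹ by positivity)
      rw [Real.log_inv] at this
      have h2 : (1 - u)⁻¹ - 1 = u / (1 - u) := by field_simp; ring
      linarith
    rw [li2f, div_le_iff₀ hu0]
    calc -Real.log (1 - u) ≤ u / (1 - u) := hkey
      _ ≤ u / (1 - b) := by
        apply div_le_div_of_nonneg_left hu0.le (by linarith) (by linarith)
      _ = 1 / (1 - b) * u := by ring

lemma li2f_intervalIntegrable {b : ℝ} (hb0 : 0 ≤ b) (hb : b < 1) :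
    IntervalIntegrable li2f volume 0 b := by
  rw [intervalIntegrable_iff_integrableOn_Ioc_of_le hb0]
  refine Integrable.mono' (g := fun _ => 1 / (1 - b))
    (integrableOn_const (by simp)) li2f_meas.aestronglyMeasurable.restrict ?_
  refine (ae_restrict_iff' measurableSet_Ioc).2 (Eventually.of_forall fun u hu => ?_)
  rw [Real.norm_eq_abs, abs_of_nonneg (li2f_bounds hb hu).1]
  exact (li2f_bounds hb hu).2

lemma Li2_eq_integral {x : ℝ} (hx0 : 0 ≤ x) (hx1 : x < 1) :
    Li2 x = ∫ u in (0:ℝ)..x, li2f u := by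
  rw [intervalIntegral.integral_of_le hx0]
  set F : ℕ → ℝ → ℝ := fun k u => u ^ k / ((k:ℝ) + 1) with hFdef
  have hF_int : ∀ k, Integrable (F k) (volume.restrict (Ioc (0:ℝ) x)) := by
    intro k
    exact (Continuous.integrableOn_Ioc (by fun_prop))
  have hval : ∀ k, ∫ u in Ioc (0:ℝ) x, F k u = x ^ (k+1) / ((k:ℝ) + 1) ^ 2 := by
    intro k
    rw [← intervalIntegral.integral_of_le hx0]
    simp only [hFdef]
    rw [intervalIntegral.integral_div, integral_pow]
    rw [zero_pow (Nat.succ_ne_zero k)]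
    push_cast
    rw [sub_zero, div_div]
    ring
  have hF_sum : Summable fun k => ∫ u in Ioc (0:ℝ) x, ‖F k u‖ := by
    apply Summable.of_nonneg_of_le
      (fun k => integral_nonneg fun u => norm_nonneg _)
      (fun k => ?_)
      ((summable_geometric_of_lt_one hx0 hx1).mul_right x)
    have hle : ∀ u ∈ Ioc (0:ℝ) x, ‖F k u‖ ≤ x ^ k := by
      intro u hu
      rw [Real.norm_eq_abs, hFdef]
      have hu0 : 0 < u := hu.1
      have h1 : |u ^ k / ((k:ℝ) + 1)| = u ^ k / ((k:ℝ) + 1) := by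
        rw [abs_of_nonneg]; positivity
      rw [h1]
      calc u ^ k / ((k:ℝ) + 1) ≤ u ^ k / 1 := by
            apply div_le_div_of_nonneg_left (by positivity) one_pos
            push_cast; linarith [Nat.cast_nonneg (α := ℝ) k]
        _ = u ^ k := div_one _
        _ ≤ x ^ k := pow_le_pow_left₀ hu0.le hu.2 k
    calc ∫ u in Ioc (0:ℝ) x, ‖F k u‖ ≤ ∫ _u in Ioc (0:ℝ) x, x ^ k := by
          apply setIntegral_mono_on (hF_int k).norm
            (integrableOn_const (by simp)) measurableSet_Ioc hle
      _ = x ^ k * x := by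
          rw [setIntegral_const, smul_eq_mul, Real.volume_real_Ioc_of_le hx0, sub_zero,
            mul_comm]
  have hswap := integral_tsum_of_summable_integral_norm hF_int hF_sum
  have hLi : Li2 x = ∑' k, ∫ u in Ioc (0:ℝ) x, F k u := by
    rw [Li2]
    congr 1
    funext k
    rw [hval k]
  rw [hLi, hswap]
  apply setIntegral_congr_fun measurableSet_Ioc
  intro u hu
  have hu0 : 0 < u := hu.1
  have hu1 : u < 1 := lt_of_le_of_lt hu.2 hx1
  have habs : |u| < 1 := by rw [abs_of_pos hu0]; exact hu1
  have hsum := (Real.hasSum_pow_div_log_of_abs_lt_one habs).div_const u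
  have hcongr : ∀ n : ℕ, u ^ (n + 1) / (↑n + 1) / u = F n u := by
    intro n
    simp only [hFdef]
    rw [pow_succ]
    field_simp
  show (∑' k, F k u) = li2f u
  rw [funext hcongr] at hsum
  rw [li2f, ← hsum.tsum_eq]

lemma li2f_continuousAt {x : ℝ} (hx0 : 0 < x) (hx1 : x < 1) : ContinuousAt li2f x := by
  unfold li2f
  apply ContinuousAt.div _ continuousAt_id hx0.ne'
  apply ContinuousAt.neg
  exact (Real.continuousAt_log (by linarith)).comp (by fun_prop)

lemma Li2_hasDerivAt {x : ℝ} (hx0 : 0 < x) (hx1 : x < 1) :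
    HasDerivAt Li2 (-Real.log (1 - x) / x) x := by
  set a := x / 2 with ha
  have ha0 : 0 < a := by positivity
  have hax : a < x := by rw [ha]; linarith
  have hF : HasDerivAt (fun y => Li2 a + ∫ u in a..y, li2f u) (li2f x) x := by
    apply HasDerivAt.const_add
    apply intervalIntegral.integral_hasDerivAt_right
    · apply (li2f_intervalIntegrable hx0.le hx1).mono_set
      rw [uIcc_of_le hax.le, uIcc_of_le hx0.le]
      exact Icc_subset_Icc ha0.le le_rfl
    · exact li2f_meas.aestronglyMeasurable.stronglyMeasurableAtFilter
    · exact li2f_continuousAt hx0 hx1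
  have hev : (fun y => Li2 a + ∫ u in a..y, li2f u) =ᶠ[nhds x] Li2 := by
    have hopen : IsOpen (Ioo a (1:ℝ)) := isOpen_Ioo
    filter_upwards [hopen.mem_nhds ⟨hax, hx1⟩] with y hy
    have h1 : Li2 y = ∫ u in (0:ℝ)..y, li2f u := Li2_eq_integral (by linarith [hy.1]) hy.2
    have h2 : Li2 a = ∫ u in (0:ℝ)..a, li2f u := Li2_eq_integral ha0.le (by linarith)
    have h3 : (∫ u in (0:ℝ)..a, li2f u) + (∫ u in a..y, li2f u) = ∫ u in (0:ℝ)..y, li2f u := by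
      apply intervalIntegral.integral_add_adjacent_intervals
      · exact li2f_intervalIntegrable ha0.le (by linarith)
      · apply ((li2f_intervalIntegrable (by linarith [hy.1] : (0:ℝ) ≤ y) hy.2).mono_set)
        rw [uIcc_of_le hy.1.le, uIcc_of_le (by linarith [hy.1] : (0:ℝ) ≤ y)]
        exact Icc_subset_Icc ha0.le le_rfl
    rw [h1, h2, ← h3]
  exact (hF.congr_of_eventuallyEq hev.symm : HasDerivAt Li2 (li2f x) x)

/-! ### The inner integral at the boundary `w = ±1` -/

lemma Iin_one_small {η : ℝ} (hη0 : 0 < η) (hη : η ≤ 1/2) : Iin η 1 = 12 / π ^ 2 := by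
  have ht2 : 2 ≤ η⁻¹ := by
    have h1 : η * η⁻¹ = 1 := mul_inv_cancel₀ hη0.ne'
    nlinarith
  have heq : EqOn (fun z => Φ₀ η 1 z) (fun _ => 6 / π ^ 2) (uIcc (-1:ℝ) 1) := by
    intro z hz
    rw [uIcc_of_le (by norm_num)] at hz
    have hz1 : |z| ≤ 1 := abs_le.2 ⟨hz.1, hz.2⟩
    have hmax : max |(1:ℝ)| |z| = 1 := by rw [abs_one]; exact max_eq_left hz1
    simp only []
    rcases eq_or_lt_of_le hz.1 with hm1 | hm1
    · rw [Φ₀, if_neg (by rw [← hm1]; norm_num), if_neg (by rw [abs_one]; linarith)]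
    · have hz0 : (0:ℝ) < 1 + z := by linarith
      rw [Φ₀, if_pos (by positivity), hmax, Υ_of_one_le, mul_one]
      have : 0 ≤ (η⁻¹ - 1 - 1) / |1 + z| := by
        apply div_nonneg (by linarith) (abs_nonneg _)
      linarith
  rw [Iin, intervalIntegral.integral_congr heq, intervalIntegral.integral_const]
  norm_num
  ring

lemma Iin_one {η : ℝ} (hη : 1/2 < η) :
    Iin η 1 = 6 / π ^ 2 * (η⁻¹ + (η⁻¹ - 2) * (Real.log 2 - Real.log (2 - η⁻¹))) := by
  have hη0 : 0 < η := by linarith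
  have ht0 : 0 < η⁻¹ := inv_pos.2 hη0
  have ht2 : η⁻¹ < 2 := by
    have h1 : η * η⁻¹ = 1 := mul_inv_cancel₀ hη0.ne'
    nlinarith
  set t := η⁻¹ with htdef
  set c := 1 - t with hcdef
  have hc1 : -1 < c := by rw [hcdef]; linarith
  have hc2 : c < 1 := by rw [hcdef]; linarith
  have hint1 : IntervalIntegrable (fun z => Φ₀ η 1 z) volume (-1) c := by
    rw [intervalIntegrable_iff_integrableOn_Ioc_of_le hc1.le]
    exact Φ₀_integrableOn (by simp)
  have hint2 : IntervalIntegrable (fun z => Φ₀ η 1 z) volume c 1 := by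
    rw [intervalIntegrable_iff_integrableOn_Ioc_of_le hc2.le]
    exact Φ₀_integrableOn (by simp)
  have hsplit : Iin η 1 = (∫ z in (-1:ℝ)..c, Φ₀ η 1 z) + ∫ z in c..1, Φ₀ η 1 z :=
    (intervalIntegral.integral_add_adjacent_intervals hint1 hint2).symm
  have hmax : ∀ z : ℝ, |z| ≤ 1 → max |(1:ℝ)| |z| = 1 := fun z hz => by
    rw [abs_one]; exact max_eq_left hz
  have hfirst : (∫ z in (-1:ℝ)..c, Φ₀ η 1 z) = 0 := by
    have heq : EqOn (fun z => Φ₀ η 1 z) (fun _ => (0:ℝ)) (uIcc (-1:ℝ) c) := by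
      intro z hz
      rw [uIcc_of_le hc1.le] at hz
      simp only []
      rcases eq_or_lt_of_le hz.1 with hm1 | hm1
      · rw [Φ₀, if_neg (by rw [← hm1]; norm_num), if_pos (by rw [abs_one]; linarith)]
      · have hz0 : (0:ℝ) < 1 + z := by linarith
        have hzc : z ≤ c := hz.2
        rw [Φ₀, if_pos (by positivity), hmax z (abs_le.2 ⟨hz.1, by linarith⟩)]
        rw [Υ_of_nonpos, mul_zero]
        have habs : |1 + z| = 1 + z := abs_of_pos hz0
        rw [habs]
        have h2 : (t - 1 - 1) / (1 + z) ≤ -1 := by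
          rw [div_le_iff₀ hz0]
          rw [hcdef] at hzc
          linarith
        linarith
    rw [intervalIntegral.integral_congr heq]
    simp
  have hsecond : (∫ z in c..1, Φ₀ η 1 z) =
      6 / π ^ 2 * (t + (t - 2) * (Real.log 2 - Real.log (2 - t))) := by
    have heq : EqOn (fun z => Φ₀ η 1 z) (fun z => 6 / π ^ 2 * ((z - c) / (1 + z)))
        (uIcc c 1) := by
      intro z hz
      rw [uIcc_of_le hc2.le] at hz
      have hz0 : (0:ℝ) < 1 + z := by linarith [hz.1]
      have habs : |1 + z| = 1 + z := abs_of_pos hz0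
      simp only []
      rw [Φ₀, if_pos (by positivity), hmax z (abs_le.2 ⟨by linarith [hz.1], hz.2⟩), habs]
      congr 1
      have harg : 1 + (t - 1 - 1) / (1 + z) = (z - c) / (1 + z) := by
        rw [hcdef]; field_simp; ring
      rw [harg]
      rcases eq_or_lt_of_le hz.1 with hcz | hcz
      · rw [← hcz, sub_self, zero_div, Υ_of_nonpos le_rfl]
      · have h1 : 0 < (z - c) / (1 + z) := div_pos (by linarith) hz0
        have h2 : (z - c) / (1 + z) < 1 := by
          rw [div_lt_one hz0]; linarith
        rw [Υ, if_neg (not_le.2 h1), if_pos h2]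
    rw [intervalIntegral.integral_congr heq]
    rw [intervalIntegral.integral_const_mul]
    congr 1
    have hderiv : ∀ z ∈ uIcc c 1, HasDerivAt (fun z => z - (1 + c) * Real.log (1 + z))
        ((z - c) / (1 + z)) z := by
      intro z hz
      rw [uIcc_of_le hc2.le] at hz
      have hz0 : (0:ℝ) < 1 + z := by linarith [hz.1]
      have hlog : HasDerivAt (fun z : ℝ => Real.log (1 + z)) (1 / (1 + z)) z := by
        have h1 : HasDerivAt (fun z : ℝ => 1 + z) 1 z := (hasDerivAt_id z).const_add 1
        have := (Real.hasDerivAt_log hz0.ne').comp z h1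
        simpa [Function.comp_def] using this
      have h2 := (hasDerivAt_id z).sub (hlog.const_mul (1 + c))
      have heq2 : (z - c) / (1 + z) = 1 - (1 + c) * (1 / (1 + z)) := by
        field_simp
        ring
      rw [heq2]
      exact h2
    have hcont : IntervalIntegrable (fun z => (z - c) / (1 + z)) volume c 1 := by
      apply ContinuousOn.intervalIntegrable
      apply ContinuousOn.div (by fun_prop) (by fun_prop)
      intro z hz
      rw [uIcc_of_le hc2.le] at hz
      have : (0:ℝ) < 1 + z := by linarith [hz.1]
      exact this.ne'
    rw [intervalIntegral.integral_eq_sub_of_hasDerivAt hderiv hcont]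
    rw [show (1:ℝ) + c = 2 - t by rw [hcdef]; ring, hcdef]
    ring_nf
  rw [hsplit, hfirst, hsecond, zero_add]

/-! ### The primitive of the outer integral -/

noncomputable def Pfun (η : ℝ) : ℝ :=
  6 / π ^ 2 * (Li2 (1/(2*η)) - (2*η - 1) * (Real.log (2*η - 1) - Real.log (2*η)) - 1)

lemma Pfun_hasDerivAt {η : ℝ} (hη : 1/2 < η) : HasDerivAt Pfun (-(Iin η 1)) η := by
  have hη0 : 0 < η := by linarith
  have h2η : (0:ℝ) < 2*η := by linarith
  have h2η1 : (0:ℝ) < 2*η - 1 := by linarith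
  have hx0 : (0:ℝ) < 1/(2*η) := by positivity
  have hx1 : 1/(2*η) < 1 := by rw [div_lt_one h2η]; linarith
  have hinner : HasDerivAt (fun η : ℝ => 1/(2*η)) (-(2*η^2)⁻¹) η := by
    have h0 : HasDerivAt (fun η : ℝ => 2*η) 2 η := by
      simpa using (hasDerivAt_id η).const_mul 2
    have h := (hasDerivAt_inv h2η.ne').comp η h0
    have heq : -((2*η)^2)⁻¹ * 2 = -(2*η^2)⁻¹ := by
      field_simp
    rw [heq] at h
    exact h.congr_of_eventuallyEq (Eventually.of_forall fun y : ℝ => by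
      show (1:ℝ)/(2*y) = ((fun y : ℝ => y⁻¹) ∘ fun η : ℝ => 2*η) y
      simp [one_div])
  have hLi : HasDerivAt (fun η : ℝ => Li2 (1/(2*η)))
      ((-Real.log (1 - 1/(2*η)) / (1/(2*η))) * (-(2*η^2)⁻¹)) η :=
    by have := (Li2_hasDerivAt hx0 hx1).comp η hinner; exact this
  have hA : HasDerivAt (fun η : ℝ => Real.log (2*η - 1)) (2/(2*η-1)) η := by
    have h0 : HasDerivAt (fun η : ℝ => 2*η - 1) 2 η := by
      simpa using ((hasDerivAt_id η).const_mul 2).sub_const 1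
    have h := (Real.hasDerivAt_log h2η1.ne').comp η h0
    rw [show (2:ℝ)/(2*η-1) = (2*η-1)⁻¹ * 2 from div_eq_inv_mul 2 _]
    simpa [Function.comp_def] using h
  have hB : HasDerivAt (fun η : ℝ => Real.log (2*η)) (2/(2*η)) η := by
    have h0 : HasDerivAt (fun η : ℝ => 2*η) 2 η := by
      simpa using (hasDerivAt_id η).const_mul 2
    have h := (Real.hasDerivAt_log h2η.ne').comp η h0
    rw [show (2:ℝ)/(2*η) = (2*η)⁻¹ * 2 from div_eq_inv_mul 2 _]
    simpa [Function.comp_def] using h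
  have hT2 : HasDerivAt (fun η : ℝ => (2*η - 1) * (Real.log (2*η - 1) - Real.log (2*η)))
      (2 * (Real.log (2*η - 1) - Real.log (2*η)) + (2*η - 1) * (2/(2*η-1) - 2/(2*η))) η := by
    have h0 : HasDerivAt (fun η : ℝ => 2*η - 1) 2 η := by
      simpa using ((hasDerivAt_id η).const_mul 2).sub_const 1
    exact h0.mul (hA.sub hB)
  have hP : HasDerivAt Pfun
      (6 / π ^ 2 * (((-Real.log (1 - 1/(2*η)) / (1/(2*η))) * (-(2*η^2)⁻¹)) -
        (2 * (Real.log (2*η - 1) - Real.log (2*η)) + (2*η - 1) * (2/(2*η-1) - 2/(2*η))))) η := by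
    have := ((hLi.sub hT2).sub_const 1).const_mul (6 / π ^ 2)
    exact this
  convert hP using 1
  rw [Iin_one hη]
  rw [show (1 - 1/(2*η)) = (2*η - 1)/(2*η) by field_simp,
    Real.log_div h2η1.ne' h2η.ne']
  rw [show (2 - η⁻¹) = (2*η - 1)/η by field_simp, Real.log_div h2η1.ne' hη0.ne']
  rw [Real.log_mul two_ne_zero hη0.ne']
  have h2η1' : 2*η - 1 ≠ 0 := h2η1.ne'
  field_simp
  have hinv : (2*η - 1) * (2*η - 1)⁻¹ = 1 := mul_inv_cancel₀ h2η1'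
  linear_combination (2*η) * hinv

lemma Pfun_tendsto_atTop : Tendsto Pfun atTop (nhds 0) := by
  have hx : Tendsto (fun η : ℝ => 1/(2*η)) atTop (nhds 0) := by
    have h1 : Tendsto (fun η : ℝ => 2*η) atTop atTop := tendsto_id.const_mul_atTop two_pos
    exact (tendsto_inv_atTop_zero.comp h1).congr fun η => by
      simp [Function.comp, one_div]
  have hLi : Tendsto (fun η : ℝ => Li2 (1/(2*η))) atTop (nhds 0) := by
    have hcw : ContinuousWithinAt Li2 (Icc (-1:ℝ) 1) 0 :=
      Li2_continuousOn 0 (by norm_num)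
    rw [ContinuousWithinAt, Li2_zero] at hcw
    apply hcw.comp
    rw [tendsto_nhdsWithin_iff]
    refine ⟨hx, ?_⟩
    filter_upwards [eventually_gt_atTop (1/2:ℝ)] with η hη
    have hη0 : (0:ℝ) < η := by linarith
    constructor
    · have : (0:ℝ) < 1/(2*η) := by positivity
      linarith
    · rw [div_le_one (by linarith)]; linarith
  have hslope : Tendsto (fun u : ℝ => Real.log (1 - u) / u) (nhdsWithin 0 {(0:ℝ)}ᶜ)
      (nhds (-1)) := by
    have hder : HasDerivAt (fun u : ℝ => Real.log (1 - u)) (-1) 0 := by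
      have h0 : HasDerivAt (fun u : ℝ => 1 - u) (-1) 0 := by
        simpa using (hasDerivAt_id (0:ℝ)).const_sub 1
      have h := (Real.hasDerivAt_log (by norm_num : (1:ℝ) - 0 ≠ 0)).comp 0 h0
      simpa [Function.comp_def] using h
    have := hasDerivAt_iff_tendsto_slope.1 hder
    apply this.congr'
    filter_upwards [self_mem_nhdsWithin] with u hu
    have hu0 : u ≠ 0 := by simpa using hu
    rw [slope_def_field]
    simp [div_eq_iff hu0]
  have hxne : Tendsto (fun η : ℝ => 1/(2*η)) atTop (nhdsWithin 0 {(0:ℝ)}ᶜ) := by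
    rw [tendsto_nhdsWithin_iff]
    refine ⟨hx, ?_⟩
    filter_upwards [eventually_gt_atTop (0:ℝ)] with η hη
    have : (0:ℝ) < 1/(2*η) := by positivity
    simpa using this.ne'
  have hterm : Tendsto (fun η : ℝ => (2*η - 1) * (Real.log (2*η - 1) - Real.log (2*η)))
      atTop (nhds (-1)) := by
    have hkey : Tendsto (fun η : ℝ => (1 - 1/(2*η)) * (Real.log (1 - 1/(2*η)) / (1/(2*η))))
        atTop (nhds (-1)) := by
      have h1 : Tendsto (fun η : ℝ => 1 - 1/(2*η)) atTop (nhds 1) := by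
        simpa using (hx.const_sub 1)
      have h2 : Tendsto (fun η : ℝ => Real.log (1 - 1/(2*η)) / (1/(2*η)))
          atTop (nhds (-1)) := hslope.comp hxne
      simpa using h1.mul h2
    apply hkey.congr'
    filter_upwards [eventually_gt_atTop (1/2:ℝ)] with η hη
    have hη0 : (0:ℝ) < η := by linarith
    have h2η : (0:ℝ) < 2*η := by linarith
    have h2η1 : (0:ℝ) < 2*η - 1 := by linarith
    rw [show (1 - 1/(2*η)) = (2*η - 1)/(2*η) by field_simp,
      Real.log_div h2η1.ne' h2η.ne']
    rw [div_div_eq_mul_div, div_mul_eq_mul_div, mul_comm]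
    field_simp
  have : Tendsto Pfun atTop (nhds (6 / π ^ 2 * (0 - (-1) - 1))) := by
    apply Tendsto.const_mul
    exact (hLi.sub hterm).sub_const 1
  simpa using this

lemma Pfun_continuousWithinAt : ContinuousWithinAt Pfun (Ici (1/2:ℝ)) (1/2) := by
  unfold Pfun
  apply ContinuousWithinAt.mul continuousWithinAt_const
  apply ContinuousWithinAt.sub _ continuousWithinAt_const
  apply ContinuousWithinAt.sub
  · -- Li2 ∘ (1/(2η))
    have hmap : MapsTo (fun η : ℝ => 1/(2*η)) (Ici (1/2:ℝ)) (Icc (-1:ℝ) 1) := by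
      intro η hη
      have hη2 : (1/2:ℝ) ≤ η := hη
      have hη0 : (0:ℝ) < η := by linarith
      constructor
      · have : (0:ℝ) < 1/(2*η) := by positivity
        linarith
      · rw [div_le_one (by linarith)]; linarith
    have hLi : ContinuousWithinAt Li2 (Icc (-1:ℝ) 1) 1 := Li2_continuousOn 1 (by norm_num)
    have hin : ContinuousWithinAt (fun η : ℝ => 1/(2*η)) (Ici (1/2:ℝ)) (1/2) := by
      apply ContinuousAt.continuousWithinAt
      have : ((2:ℝ) * (1/2)) ≠ 0 := by norm_num
      fun_prop (disch := assumption)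
    have hLi2 : ContinuousWithinAt Li2 (Icc (-1:ℝ) 1) ((fun η : ℝ => 1/(2*η)) (1/2:ℝ)) := by
      have h : ((fun η : ℝ => 1/(2*η)) (1/2:ℝ)) = 1 := by norm_num
      rw [h]
      exact hLi
    exact ContinuousWithinAt.comp (g := Li2) (f := fun η : ℝ => 1/(2*η))
      (t := Icc (-1:ℝ) 1) hLi2 hin hmap
  · -- (2η-1)(log(2η-1) - log(2η))
    have hsplit : (fun η : ℝ => (2*η - 1) * (Real.log (2*η - 1) - Real.log (2*η))) =
        (fun η : ℝ => (2*η - 1) * Real.log (2*η - 1) - (2*η - 1) * Real.log (2*η)) := by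
      funext η; ring
    rw [hsplit]
    apply ContinuousWithinAt.sub
    · apply ContinuousAt.continuousWithinAt
      have h := Real.continuous_mul_log.comp (by fun_prop :
        Continuous (fun η : ℝ => 2*η - 1))
      exact h.continuousAt
    · apply ContinuousAt.continuousWithinAt
      apply ContinuousAt.mul (by fun_prop)
      apply ContinuousAt.comp (Real.continuousAt_log (by norm_num)) (by fun_prop)

lemma Pfun_half : Pfun (1/2) = 6 / π ^ 2 * (π ^ 2 / 6 - 1) := by
  rw [Pfun]
  norm_num [Li2_one]

lemma outer_eq {ξ : ℝ} (hξ : 1/2 ≤ ξ) : (∫ η in Ioi ξ, Iin η 1) = Pfun ξ := by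
  have hξ0 : (0:ℝ) < ξ := by linarith
  have key := integral_Ioi_of_hasDerivAt_of_tendsto (f := fun η => -(Pfun η))
    (f' := fun η => Iin η 1) (a := ξ) (m := 0)
    ?_ ?_ ?_ ?_
  · rw [key]; ring
  · rcases eq_or_lt_of_le hξ with h | h
    · rw [← h]
      exact Pfun_continuousWithinAt.neg
    · exact ((Pfun_hasDerivAt h).continuousAt.continuousWithinAt).neg
  · intro x hx
    have := (Pfun_hasDerivAt (lt_of_le_of_lt hξ hx)).neg
    rw [neg_neg] at this; exact this
  · exact Iin_integrableOn hξ0 (by norm_num)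
  · rw [show (0:ℝ) = -0 by ring]
    exact Pfun_tendsto_atTop.neg

lemma Φbd_eq_Pfun {ξ : ℝ} (hξ : 1/2 ≤ ξ) : Φbd ξ = Pfun ξ := by
  rcases eq_or_lt_of_le hξ with h | h
  · rw [← h, Pfun_half, Φbd, if_pos le_rfl]
    field_simp
    ring
  · have h2ξ : (1:ℝ) < 2*ξ := by linarith
    have h2ξ0 : (0:ℝ) < 2*ξ := by linarith
    have h2ξ1 : (0:ℝ) < 2*ξ - 1 := by linarith
    rw [Φbd, if_neg (not_le.2 h), Ψ, if_neg (not_lt.2 h2ξ.le), if_neg (by linarith)]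
    rw [Pfun]
    have hlog : Real.log (1 - (2*ξ)⁻¹) = Real.log (2*ξ - 1) - Real.log (2*ξ) := by
      rw [show (1 - (2*ξ)⁻¹) = (2*ξ - 1)/(2*ξ) by field_simp, Real.log_div h2ξ1.ne' h2ξ0.ne']
    rw [hlog, show (2*ξ)⁻¹ = 1/(2*ξ) by rw [one_div]]
    field_simp
    ring

lemma Φ_one_eq {ξ : ℝ} (hξ : 0 < ξ) : Φ ξ 1 = Φbd ξ := by
  rcases le_or_gt ξ (1/2) with h | h
  · -- small case
    have hsplit : Ioi ξ = Ioc ξ (1/2) ∪ Ioi (1/2) := (Ioc_union_Ioi_eq_Ioi h).symm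
    have hint : IntegrableOn (fun η => Iin η 1) (Ioi ξ) := Iin_integrableOn hξ (by norm_num)
    rw [Φ_eq_Iin, hsplit, setIntegral_union (Ioc_disjoint_Ioi le_rfl) measurableSet_Ioi
      (hint.mono_set (by rw [hsplit]; exact subset_union_left))
      (hint.mono_set (by rw [hsplit]; exact subset_union_right))]
    have h1 : (∫ η in Ioc ξ (1/2), Iin η 1) = (1/2 - ξ) * (12 / π ^ 2) := by
      rw [setIntegral_congr_fun measurableSet_Ioc
        (fun η hη => Iin_one_small (lt_trans hξ hη.1) hη.2)]
      rw [setIntegral_const, Real.volume_real_Ioc_of_le (by linarith), smul_eq_mul]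
    have h2 : (∫ η in Ioi (1/2:ℝ), Iin η 1) = Pfun (1/2) := outer_eq le_rfl
    rw [h1, h2, Pfun_half, Φbd, if_pos h]
    field_simp
    ring
  · rw [Φ_eq_Iin, outer_eq h.le, Φbd_eq_Pfun h.le]

lemma Φ₀_neg_one (η z : ℝ) : Φ₀ η (-1) z = Φ₀ η 1 (-z) := by
  unfold Φ₀
  have h1 : (-1) + z = -(1 + -z) := by ring
  have h2 : |(-1) + z| = |1 + -z| := by rw [h1, abs_neg]
  have h3 : |(-1:ℝ)| = |(1:ℝ)| := by rw [abs_neg]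
  have h4 : |z| = |-z| := (abs_neg z).symm
  simp only [h1, neg_ne_zero, abs_neg, abs_one]

lemma Φ_neg_one_eq (ξ : ℝ) : Φ ξ (-1) = Φ ξ 1 := by
  rw [Φ_eq_Iin, Φ_eq_Iin]
  apply setIntegral_congr_fun measurableSet_Ioi
  intro η _
  show Iin η (-1) = Iin η 1
  rw [Iin, Iin]
  rw [intervalIntegral.integral_congr (fun z _ => Φ₀_neg_one η z)]
  rw [intervalIntegral.integral_comp_neg (fun z => Φ₀ η 1 z)]
  norm_num

/-- `Φ` extends continuously to `ℝ_{>0} × [−1,1]`; in particular, for each fixed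
`ξ > 0`, `Φ(ξ,w)` tends to `Φbd ξ` as `w → ±1` from inside `(−1,1)`. -/
theorem stmt12 :
    (∃ Φe : ℝ × ℝ → ℝ,
      ContinuousOn Φe (Ioi (0 : ℝ) ×ˢ Icc (-1 : ℝ) 1) ∧
      (∀ ξ ∈ Ioi (0 : ℝ), ∀ w ∈ Ioo (-1 : ℝ) 1, Φe (ξ, w) = Φ ξ w) ∧
      (∀ ξ ∈ Ioi (0 : ℝ), Φe (ξ, 1) = Φbd ξ ∧ Φe (ξ, -1) = Φbd ξ)) ∧
    ∀ ξ : ℝ, 0 < ξ →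
      Tendsto (fun w => Φ ξ w) (nhdsWithin 1 (Ioo (-1 : ℝ) 1)) (nhds (Φbd ξ)) ∧
      Tendsto (fun w => Φ ξ w) (nhdsWithin (-1) (Ioo (-1 : ℝ) 1)) (nhds (Φbd ξ)) := by
  have hbd : ∀ ξ : ℝ, 0 < ξ → Φ ξ 1 = Φbd ξ ∧ Φ ξ (-1) = Φbd ξ := fun ξ hξ =>
    ⟨Φ_one_eq hξ, (Φ_neg_one_eq ξ).trans (Φ_one_eq hξ)⟩
  have hlim : ∀ ξ : ℝ, 0 < ξ → ∀ b : ℝ, b = 1 ∨ b = -1 →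
      Tendsto (fun w => Φ ξ w) (nhdsWithin b (Ioo (-1 : ℝ) 1)) (nhds (Φbd ξ)) := by
    intro ξ hξ b hb
    have hbIcc : b ∈ Icc (-1:ℝ) 1 := by rcases hb with h | h <;> rw [h] <;> norm_num
    have hmem : ((ξ, b) : ℝ × ℝ) ∈ Ioi (0:ℝ) ×ˢ Icc (-1:ℝ) 1 := ⟨hξ, hbIcc⟩
    have hC : ContinuousWithinAt (fun p : ℝ × ℝ => Φ p.1 p.2)
        (Ioi (0:ℝ) ×ˢ Icc (-1:ℝ) 1) (ξ, b) := Φ_continuousOn (ξ, b) hmem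
    have hmapsTo : MapsTo (fun w : ℝ => ((ξ, w) : ℝ × ℝ)) (Ioo (-1:ℝ) 1)
        (Ioi (0:ℝ) ×ˢ Icc (-1:ℝ) 1) := fun w hw => ⟨hξ, hw.1.le, hw.2.le⟩
    have he : ContinuousWithinAt (fun w : ℝ => ((ξ, w) : ℝ × ℝ)) (Ioo (-1:ℝ) 1) b := by
      apply ContinuousAt.continuousWithinAt
      fun_prop
    have htend := hC.tendsto.comp (he.tendsto_nhdsWithin hmapsTo)
    have hval : Φ ξ b = Φbd ξ := by
      rcases hb with h | h <;> rw [h]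
      · exact (hbd ξ hξ).1
      · exact (hbd ξ hξ).2
    rw [show (fun p : ℝ × ℝ => Φ p.1 p.2) ∘ (fun w : ℝ => ((ξ, w) : ℝ × ℝ)) =
      fun w => Φ ξ w from rfl, hval] at htend
    exact htend
  refine ⟨⟨fun p => Φ p.1 p.2, Φ_continuousOn, fun ξ _ w _ => rfl, fun ξ hξ => hbd ξ hξ⟩, ?_⟩
  intro ξ hξ
  exact ⟨hlim ξ hξ 1 (Or.inl rfl), hlim ξ hξ (-1) (Or.inr rfl)⟩
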